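/- Let (ΛV, d) be a minimal Sullivan algebra which is the minimal model of a connected closed manifold of dimension m (so H^k(ΛV) = 0 for k > m). If (ΛV, d) is m-formal, then it is formal: defining N^i = V^i for i > m (with C^i = 0 there), every closed element of the ideal I(N) generated by N = ⊕N^i in ΛV is exact, so the DGSM criterion for formality is satisfied. -/

import Mathlib

open DirectSum


/-- The ideal `N^{≤s} · ΛV^{≤s}` generated by the non-closed generators
`N^{≤s}` inside the subalgebra generated by the generators of degree `≤ s`,
viewed as a subspace of the ambient algebra. -/
def lowIdeal {A : Type*} [Ring A] [Algebra ℝ A]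
    (N V : ℕ → Submodule ℝ A) (s : ℕ) : Submodule ℝ A :=
  Submodule.span ℝ {z : A | ∃ n ∈ ⨆ i, ⨆ (_ : i ≤ s), N i,
    ∃ x ∈ Algebra.adjoin ℝ (⋃ i, ⋃ (_ : i ≤ s), (V i : Set A)), z = n * x}

/-- `s`-formality (Definition 2.2) of an algebra with generating subspaces
`V i` of degree `i` and differential `d`: for each `i ≤ s` the space `V i`
splits as `C i ⊕ N i` with `d (C i) = 0`, `d` injective on `N i`, and every
closed element of the ideal `N^{≤s} · ΛV^{≤s}` exact in the whole algebra. -/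
def sFormal {A : Type*} [Ring A] [Algebra ℝ A]
    (V : ℕ → Submodule ℝ A) (d : A →ₗ[ℝ] A) (s : ℕ) : Prop :=
  ∃ C N : ℕ → Submodule ℝ A,
    (∀ i ≤ s, C i ⊔ N i = V i) ∧
    (∀ i ≤ s, C i ⊓ N i = ⊥) ∧
    (∀ i ≤ s, ∀ x ∈ C i, d x = 0) ∧
    (∀ i ≤ s, ∀ x ∈ N i, d x = 0 → x = 0) ∧
    (∀ z ∈ lowIdeal N V s, d z = 0 → ∃ w, d w = z)

/-- The ideal `I(N)` generated by all of `N = ⊕ᵢ N i` in the whole algebra. -/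
def fullIdeal {A : Type*} [Ring A] [Algebra ℝ A]
    (N : ℕ → Submodule ℝ A) : Submodule ℝ A :=
  Submodule.span ℝ {z : A | ∃ n ∈ ⨆ i, N i, ∃ x : A, z = n * x}

/-- Formality in the sense of the Deligne–Griffiths–Morgan–Sullivan criterion
(Theorem 2.1): `V = C ⊕ N` with `d C = 0`, `d` injective on `N`, and every
closed element of the ideal `I(N)` exact. -/
def formalDGMS {A : Type*} [Ring A] [Algebra ℝ A]
    (V : ℕ → Submodule ℝ A) (d : A →ₗ[ℝ] A) : Prop :=
  ∃ C N : ℕ → Submodule ℝ A,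
    (∀ i, C i ⊔ N i = V i) ∧
    (∀ i, C i ⊓ N i = ⊥) ∧
    (∀ i, ∀ x ∈ C i, d x = 0) ∧
    (∀ i, ∀ x ∈ N i, d x = 0 → x = 0) ∧
    (∀ z ∈ fullIdeal N, d z = 0 → ∃ w, d w = z)

/-- Let `(ΛV, d)` be a minimal Sullivan algebra which is the
minimal model of a connected closed `m`-manifold, so it is graded by `𝒜`
(with `V i ⊆ 𝒜 i`, each `𝒜 j` generated by the generators of degree `≤ j`,
`d` of degree `+1`, `d ∘ d = 0`) and its cohomology vanishes above degree `m`
(every closed element of degree `> m` is exact).  If `(ΛV, d)` is `m`-formal,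
then it is formal in the sense of the DGMS criterion. -/
theorem stmt12 {A : Type*} [Ring A] [Algebra ℝ A]
    (𝒜 : ℕ → Submodule ℝ A) [GradedRing 𝒜]
    (V : ℕ → Submodule ℝ A) (d : A →ₗ[ℝ] A) (m : ℕ)
    (hVA : ∀ i, V i ≤ 𝒜 i)
    (hgen : ∀ j, ∀ x ∈ 𝒜 j,
      x ∈ Algebra.adjoin ℝ (⋃ i, ⋃ (_ : i ≤ j), (V i : Set A)))
    (hdgr : ∀ i, ∀ x ∈ 𝒜 i, d x ∈ 𝒜 (i + 1))
    (hd2 : ∀ x, d (d x) = 0)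
    (hH : ∀ k, m < k → ∀ x ∈ 𝒜 k, d x = 0 → ∃ w, d w = x)
    (h : sFormal V d m) : formalDGMS V d := by
  classical
  obtain ⟨C, N, hCN, hCNinf, hdC, hdN, hlow⟩ := h
  choose Q hQ using fun i =>
    Submodule.exists_isCompl ((LinearMap.ker d).comap (V i).subtype)
  set C' : ℕ → Submodule ℝ A := fun i =>
    if i ≤ m then C i
    else ((LinearMap.ker d).comap (V i).subtype).map (V i).subtype with hC'
  set N' : ℕ → Submodule ℝ A := fun i =>
    if i ≤ m then N i else (Q i).map (V i).subtype with hN'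
  have hN'le : ∀ i, N' i ≤ V i := by
    intro i
    by_cases hi : i ≤ m
    · simp only [hN', if_pos hi]
      exact le_trans le_sup_right (le_of_eq (hCN i hi))
    · simp only [hN', if_neg hi]
      exact Submodule.map_subtype_le _ _
  refine ⟨C', N', ?_, ?_, ?_, ?_, ?_⟩
  · intro i
    by_cases hi : i ≤ m
    · simp only [hC', hN', if_pos hi]; exact hCN i hi
    · simp only [hC', hN', if_neg hi]
      rw [← Submodule.map_sup, (hQ i).sup_eq_top, Submodule.map_subtype_top]
  · intro i
    by_cases hi : i ≤ m
    · simp only [hC', hN', if_pos hi]; exact hCNinf i hi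
    · simp only [hC', hN', if_neg hi]
      rw [← Submodule.map_inf _ (Submodule.injective_subtype _), (hQ i).inf_eq_bot,
        Submodule.map_bot]
  · intro i x hx
    by_cases hi : i ≤ m
    · simp only [hC', if_pos hi] at hx; exact hdC i hi x hx
    · simp only [hC', if_neg hi] at hx
      obtain ⟨y, hy, rfl⟩ := hx
      exact hy
  · intro i x hx hdx
    by_cases hi : i ≤ m
    · simp only [hN', if_pos hi] at hx; exact hdN i hi x hx hdx
    · simp only [hN', if_neg hi] at hx
      obtain ⟨y, hy, rfl⟩ := hx
      have hy2 : y ∈ (LinearMap.ker d).comap (V i).subtype := hdx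
      have : y ∈ (LinearMap.ker d).comap (V i).subtype ⊓ Q i := ⟨hy2, hy⟩
      rw [(hQ i).inf_eq_bot, Submodule.mem_bot] at this
      rw [this]
      simp
  · -- main condition
    intro z hz hdz
    -- Step 1: low-degree components of elements of fullIdeal N' lie in lowIdeal N V m
    have key : ∀ k ≤ m, (decompose 𝒜 z k : A) ∈ lowIdeal N V m := by
      refine Submodule.span_induction
        (p := fun z _ => ∀ k ≤ m, (decompose 𝒜 z k : A) ∈ lowIdeal N V m)
        ?_ ?_ ?_ ?_ hz
      · rintro _ ⟨n, hn, x, rfl⟩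
        refine @Submodule.iSup_induction' ℝ A _ _ _ ℕ N'
          (fun n _ => ∀ k ≤ m, (decompose 𝒜 (n * x) k : A) ∈ lowIdeal N V m)
          ?_ ?_ ?_ _ hn
        · intro i n hni k hk
          have hnA : n ∈ 𝒜 i := hVA i (hN'le i hni)
          by_cases hik : i ≤ k
          · rw [coe_decompose_mul_of_left_mem_of_le 𝒜 hnA hik]
            have him : i ≤ m := le_trans hik hk
            have hnN : n ∈ N i := by simpa only [hN', if_pos him] using hni
            refine Submodule.subset_span ⟨n, ?_, (decompose 𝒜 x (k - i) : A), ?_, rfl⟩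
            · exact Submodule.mem_iSup_of_mem i (Submodule.mem_iSup_of_mem him hnN)
            · refine Algebra.adjoin_mono ?_ (hgen (k - i) _ (SetLike.coe_mem _))
              refine Set.iUnion_mono fun j => Set.iUnion_subset fun hj => ?_
              exact Set.subset_iUnion_of_subset (le_trans hj (by omega)) subset_rfl
          · rw [coe_decompose_mul_of_left_mem_of_not_le 𝒜 hnA hik]
            exact Submodule.zero_mem _
        · intro k hk
          simp only [zero_mul, decompose_zero, DirectSum.zero_apply, ZeroMemClass.coe_zero]
          exact Submodule.zero_mem _
        · intro n₁ n₂ _ _ ih1 ih2 k hk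
          rw [add_mul, decompose_add, DirectSum.add_apply, Submodule.coe_add]
          exact Submodule.add_mem _ (ih1 k hk) (ih2 k hk)
      · intro k hk
        simp only [decompose_zero, DirectSum.zero_apply, ZeroMemClass.coe_zero]
        exact Submodule.zero_mem _
      · intro a b _ _ ha hb k hk
        rw [decompose_add, DirectSum.add_apply, Submodule.coe_add]
        exact Submodule.add_mem _ (ha k hk) (hb k hk)
      · intro r a _ ha k hk
        rw [decompose_smul, DFinsupp.smul_apply, SetLike.val_smul]
        exact Submodule.smul_mem _ r (ha k hk)
    -- Step 2: each component is closed
    have hcomm : ∀ k, (decompose 𝒜 (d z) (k + 1) : A) = d (decompose 𝒜 z k : A) := by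
      intro k
      have hz' : d z = ∑ j ∈ (decompose 𝒜 z).support, d (decompose 𝒜 z j : A) := by
        rw [← map_sum, sum_support_decompose]
      rw [hz', decompose_sum, DFinsupp.finset_sum_apply, AddSubmonoidClass.coe_finset_sum]
      by_cases hk : k ∈ (decompose 𝒜 z).support
      · rw [Finset.sum_eq_single_of_mem k hk]
        · exact decompose_of_mem_same 𝒜 (hdgr k _ (SetLike.coe_mem _))
        · intro j _ hj
          exact decompose_of_mem_ne 𝒜 (hdgr j _ (SetLike.coe_mem _)) (by omega)
      · have hzk : (decompose 𝒜 z k : A) = 0 := by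
          rw [DFinsupp.notMem_support_iff.mp hk]; rfl
        rw [hzk, map_zero]
        refine Finset.sum_eq_zero fun j hj => ?_
        have hjk : j ≠ k := fun e => hk (e ▸ hj)
        exact decompose_of_mem_ne 𝒜 (hdgr j _ (SetLike.coe_mem _)) (by omega)
    have hzk0 : ∀ k, d (decompose 𝒜 z k : A) = 0 := by
      intro k
      rw [← hcomm k, hdz, decompose_zero, DirectSum.zero_apply, ZeroMemClass.coe_zero]
    -- Step 3: each component is exact
    have hex : ∀ k ∈ (decompose 𝒜 z).support, ∃ w, d w = (decompose 𝒜 z k : A) := by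
      intro k _
      by_cases hk : k ≤ m
      · exact hlow _ (key k hk) (hzk0 k)
      · exact hH k (by omega) _ (SetLike.coe_mem _) (hzk0 k)
    choose w hw using hex
    refine ⟨∑ k ∈ (decompose 𝒜 z).support.attach, w k.1 k.2, ?_⟩
    rw [map_sum]
    calc ∑ k ∈ (decompose 𝒜 z).support.attach, d (w k.1 k.2)
        = ∑ k ∈ (decompose 𝒜 z).support.attach, (decompose 𝒜 z k.1 : A) := by
          exact Finset.sum_congr rfl fun k _ => hw k.1 k.2
      _ = ∑ k ∈ (decompose 𝒜 z).support, (decompose 𝒜 z k : A) := by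
          exact Finset.sum_attach _ fun k => (decompose 𝒜 z k : A)
      _ = z := sum_support_decompose 𝒜 z
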